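/- For all u > 0 and v ∈ ℝ, the vector ν(u,v) = (2uⁿcos(nv), 2uⁿsin(nv), u^{2n} − 1)/(1 + u^{2n}) is a unit normal to the dihedral Enneper parametrization of order n: ‖ν(u,v)‖ = 1, ν(u,v)·σⁿ_u(u,v) = 0, and ν(u,v)·σⁿ_v(u,v) = 0. -/

import Mathlib

noncomputable section
open MeasureTheory Real

/-- Dot product on `ℝ³ = ℝ × ℝ × ℝ`. -/
def dot3 (a b : ℝ × ℝ × ℝ) : ℝ := a.1 * b.1 + a.2.1 * b.2.1 + a.2.2 * b.2.2

/-- Euclidean norm on `ℝ³ = ℝ × ℝ × ℝ`. -/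
def norm3 (a : ℝ × ℝ × ℝ) : ℝ := Real.sqrt (dot3 a a)

/-- Partial derivative in the first (`u`) variable. -/
def pdU {E : Type*} [NormedAddCommGroup E] [NormedSpace ℝ E] (f : ℝ × ℝ → E) (p : ℝ × ℝ) : E :=
  deriv (fun x => f (x, p.2)) p.1

/-- Partial derivative in the second (`v`) variable. -/
def pdV {E : Type*} [NormedAddCommGroup E] [NormedSpace ℝ E] (f : ℝ × ℝ → E) (p : ℝ × ℝ) : E :=
  deriv (fun y => f (p.1, y)) p.2

/-- The dihedral Enneper parametrization `σⁿ` of order `n`. -/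
def enneper (n : ℕ) (p : ℝ × ℝ) : ℝ × ℝ × ℝ :=
  (p.1 * ((2 * (n : ℝ) + 1) * Real.cos p.2 - p.1 ^ (2 * n) * Real.cos ((2 * (n : ℝ) + 1) * p.2))
      / (4 * (n : ℝ) + 2),
   -(p.1 * ((2 * (n : ℝ) + 1) * Real.sin p.2 + p.1 ^ (2 * n) * Real.sin ((2 * (n : ℝ) + 1) * p.2)))
      / (4 * (n : ℝ) + 2),
   p.1 ^ (n + 1) * Real.cos (((n : ℝ) + 1) * p.2) / ((n : ℝ) + 1))

/-- The unit normal `ν` of the dihedral Enneper parametrization of order `n`. -/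
def enneperNormal (n : ℕ) (p : ℝ × ℝ) : ℝ × ℝ × ℝ :=
  (1 + p.1 ^ (2 * n))⁻¹ •
    (2 * p.1 ^ n * Real.cos ((n : ℝ) * p.2),
     2 * p.1 ^ n * Real.sin ((n : ℝ) * p.2),
     p.1 ^ (2 * n) - 1)

/-- `ν(u,v) = (2uⁿcos(nv), 2uⁿsin(nv), u^{2n} − 1)/(1 + u^{2n})` is a unit
normal to the dihedral Enneper parametrization of order `n ≥ 1`, for all `u > 0`, `v ∈ ℝ`. -/
theorem enneper_unitNormal (n : ℕ) (hn : 1 ≤ n) :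
    ∀ p : ℝ × ℝ, 0 < p.1 →
      norm3 (enneperNormal n p) = 1 ∧
      dot3 (enneperNormal n p) (pdU (enneper n) p) = 0 ∧
      dot3 (enneperNormal n p) (pdV (enneper n) p) = 0 := by
  intro p hp
  have hU : pdU (enneper n) p =
      ((1 * ((2 * (n : ℝ) + 1) * Real.cos p.2 - p.1 ^ (2 * n) * Real.cos ((2 * (n : ℝ) + 1) * p.2))
          + p.1 * (0 - (↑(2 * n) * p.1 ^ (2 * n - 1)) * Real.cos ((2 * (n : ℝ) + 1) * p.2)))
        / (4 * (n : ℝ) + 2),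
       -(1 * ((2 * (n : ℝ) + 1) * Real.sin p.2 + p.1 ^ (2 * n) * Real.sin ((2 * (n : ℝ) + 1) * p.2))
          + p.1 * (0 + (↑(2 * n) * p.1 ^ (2 * n - 1)) * Real.sin ((2 * (n : ℝ) + 1) * p.2)))
        / (4 * (n : ℝ) + 2),
       (↑(n + 1) * p.1 ^ (n + 1 - 1)) * Real.cos (((n : ℝ) + 1) * p.2) / ((n : ℝ) + 1)) := by
    have hX : HasDerivAt (fun x : ℝ => x * ((2 * (n : ℝ) + 1) * Real.cos p.2 - x ^ (2 * n) * Real.cos ((2 * (n : ℝ) + 1) * p.2)) / (4 * (n : ℝ) + 2))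
        ((1 * ((2 * (n : ℝ) + 1) * Real.cos p.2 - p.1 ^ (2 * n) * Real.cos ((2 * (n : ℝ) + 1) * p.2))
            + p.1 * (0 - (↑(2 * n) * p.1 ^ (2 * n - 1)) * Real.cos ((2 * (n : ℝ) + 1) * p.2)))
          / (4 * (n : ℝ) + 2)) p.1 :=
      (((hasDerivAt_id p.1).mul ((hasDerivAt_const _ _).sub
        ((hasDerivAt_pow (2 * n) p.1).mul_const _))).div_const _)
    have hY : HasDerivAt (fun x : ℝ => -(x * ((2 * (n : ℝ) + 1) * Real.sin p.2 + x ^ (2 * n) * Real.sin ((2 * (n : ℝ) + 1) * p.2))) / (4 * (n : ℝ) + 2))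
        (-(1 * ((2 * (n : ℝ) + 1) * Real.sin p.2 + p.1 ^ (2 * n) * Real.sin ((2 * (n : ℝ) + 1) * p.2))
            + p.1 * (0 + (↑(2 * n) * p.1 ^ (2 * n - 1)) * Real.sin ((2 * (n : ℝ) + 1) * p.2)))
          / (4 * (n : ℝ) + 2)) p.1 :=
      ((((hasDerivAt_id p.1).mul ((hasDerivAt_const _ _).add
        ((hasDerivAt_pow (2 * n) p.1).mul_const _))).neg).div_const _)
    have hZ : HasDerivAt (fun x : ℝ => x ^ (n + 1) * Real.cos (((n : ℝ) + 1) * p.2) / ((n : ℝ) + 1))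
        ((↑(n + 1) * p.1 ^ (n + 1 - 1)) * Real.cos (((n : ℝ) + 1) * p.2) / ((n : ℝ) + 1)) p.1 :=
      (((hasDerivAt_pow (n + 1) p.1).mul_const _).div_const _)
    exact (hX.prodMk (hY.prodMk hZ)).deriv
  have hV : pdV (enneper n) p =
      (p.1 * ((2 * (n : ℝ) + 1) * -Real.sin p.2
          - p.1 ^ (2 * n) * (-Real.sin ((2 * (n : ℝ) + 1) * p.2) * ((2 * (n : ℝ) + 1) * 1)))
        / (4 * (n : ℝ) + 2),
       -(p.1 * ((2 * (n : ℝ) + 1) * Real.cos p.2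
          + p.1 ^ (2 * n) * (Real.cos ((2 * (n : ℝ) + 1) * p.2) * ((2 * (n : ℝ) + 1) * 1))))
        / (4 * (n : ℝ) + 2),
       p.1 ^ (n + 1) * (-Real.sin (((n : ℝ) + 1) * p.2) * (((n : ℝ) + 1) * 1)) / ((n : ℝ) + 1)) := by
    have hc2 : HasDerivAt (fun y : ℝ => Real.cos ((2 * (n : ℝ) + 1) * y))
        (-Real.sin ((2 * (n : ℝ) + 1) * p.2) * ((2 * (n : ℝ) + 1) * 1)) p.2 :=
      ((hasDerivAt_id p.2).const_mul _).cos
    have hs2 : HasDerivAt (fun y : ℝ => Real.sin ((2 * (n : ℝ) + 1) * y))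
        (Real.cos ((2 * (n : ℝ) + 1) * p.2) * ((2 * (n : ℝ) + 1) * 1)) p.2 :=
      ((hasDerivAt_id p.2).const_mul _).sin
    have hX : HasDerivAt (fun y : ℝ => p.1 * ((2 * (n : ℝ) + 1) * Real.cos y - p.1 ^ (2 * n) * Real.cos ((2 * (n : ℝ) + 1) * y)) / (4 * (n : ℝ) + 2))
        (p.1 * ((2 * (n : ℝ) + 1) * -Real.sin p.2
            - p.1 ^ (2 * n) * (-Real.sin ((2 * (n : ℝ) + 1) * p.2) * ((2 * (n : ℝ) + 1) * 1)))
          / (4 * (n : ℝ) + 2)) p.2 :=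
      (((((Real.hasDerivAt_cos p.2).const_mul _).sub (hc2.const_mul _)).const_mul p.1).div_const _)
    have hY : HasDerivAt (fun y : ℝ => -(p.1 * ((2 * (n : ℝ) + 1) * Real.sin y + p.1 ^ (2 * n) * Real.sin ((2 * (n : ℝ) + 1) * y))) / (4 * (n : ℝ) + 2))
        (-(p.1 * ((2 * (n : ℝ) + 1) * Real.cos p.2
            + p.1 ^ (2 * n) * (Real.cos ((2 * (n : ℝ) + 1) * p.2) * ((2 * (n : ℝ) + 1) * 1))))
          / (4 * (n : ℝ) + 2)) p.2 :=
      ((((((Real.hasDerivAt_sin p.2).const_mul _).add (hs2.const_mul _)).const_mul p.1).neg).div_const _)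
    have hZ : HasDerivAt (fun y : ℝ => p.1 ^ (n + 1) * Real.cos (((n : ℝ) + 1) * y) / ((n : ℝ) + 1))
        (p.1 ^ (n + 1) * (-Real.sin (((n : ℝ) + 1) * p.2) * (((n : ℝ) + 1) * 1)) / ((n : ℝ) + 1)) p.2 :=
      (((((hasDerivAt_id p.2).const_mul _).cos).const_mul _).div_const _)
    exact (hX.prodMk (hY.prodMk hZ)).deriv
  obtain ⟨k, rfl⟩ : ∃ k, n = k + 1 := ⟨n - 1, by omega⟩
  have h1 : Real.cos ((2 * ((k:ℝ) + 1) + 1) * p.2)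
      = Real.cos (((k:ℝ) + 1) * p.2) * Real.cos ((((k:ℝ) + 1) + 1) * p.2)
        - Real.sin (((k:ℝ) + 1) * p.2) * Real.sin ((((k:ℝ) + 1) + 1) * p.2) := by
    rw [show (2 * ((k:ℝ) + 1) + 1) * p.2 = ((k:ℝ) + 1) * p.2 + (((k:ℝ) + 1) + 1) * p.2 by ring,
      Real.cos_add]
  have h2 : Real.sin ((2 * ((k:ℝ) + 1) + 1) * p.2)
      = Real.sin (((k:ℝ) + 1) * p.2) * Real.cos ((((k:ℝ) + 1) + 1) * p.2)
        + Real.cos (((k:ℝ) + 1) * p.2) * Real.sin ((((k:ℝ) + 1) + 1) * p.2) := by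
    rw [show (2 * ((k:ℝ) + 1) + 1) * p.2 = ((k:ℝ) + 1) * p.2 + (((k:ℝ) + 1) + 1) * p.2 by ring,
      Real.sin_add]
  have h3 : Real.cos ((((k:ℝ) + 1) + 1) * p.2)
      = Real.cos (((k:ℝ) + 1) * p.2) * Real.cos p.2 - Real.sin (((k:ℝ) + 1) * p.2) * Real.sin p.2 := by
    rw [show (((k:ℝ) + 1) + 1) * p.2 = ((k:ℝ) + 1) * p.2 + p.2 by ring, Real.cos_add]
  have h4 : Real.sin ((((k:ℝ) + 1) + 1) * p.2)
      = Real.sin (((k:ℝ) + 1) * p.2) * Real.cos p.2 + Real.cos (((k:ℝ) + 1) * p.2) * Real.sin p.2 := by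
    rw [show (((k:ℝ) + 1) + 1) * p.2 = ((k:ℝ) + 1) * p.2 + p.2 by ring, Real.sin_add]
  have hpyth := Real.sin_sq_add_cos_sq (((k:ℝ) + 1) * p.2)
  have hden : (0:ℝ) < 1 + p.1 ^ (2 * (k + 1)) := by positivity
  have hden2 : (4 * ((k:ℝ) + 1) + 2) ≠ 0 := by positivity
  have hden3 : ((k:ℝ) + 1 + 1) ≠ 0 := by positivity
  have e1 : 2 * (k + 1) - 1 = 2 * k + 1 := by omega
  have e2 : (k + 1) + 1 - 1 = k + 1 := by omega
  refine ⟨?_, ?_, ?_⟩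
  · rw [norm3, show dot3 (enneperNormal (k+1) p) (enneperNormal (k+1) p) = 1 from ?_, Real.sqrt_one]
    simp only [enneperNormal, dot3, Prod.smul_fst, Prod.smul_snd, smul_eq_mul]
    field_simp
    push_cast
    linear_combination (4 * p.1 ^ (2 * (k + 1))) * hpyth
  · rw [hU]
    simp only [enneperNormal, dot3, Prod.smul_fst, Prod.smul_snd, smul_eq_mul]
    rw [e1, e2]
    push_cast
    rw [h1, h2, h3, h4]
    field_simp
    push_cast
    linear_combination (-(p.1 ^ (k + 1) * (4 * ((k:ℝ) + 1) + 2) * p.1 ^ (2 * (k + 1))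
        * (Real.cos (((k:ℝ) + 1) * p.2) * Real.cos p.2
            - Real.sin (((k:ℝ) + 1) * p.2) * Real.sin p.2))) * hpyth
  · rw [hV]
    simp only [enneperNormal, dot3, Prod.smul_fst, Prod.smul_snd, smul_eq_mul]
    push_cast
    rw [h1, h2, h3, h4]
    field_simp
    push_cast
    linear_combination (p.1 ^ (k + 1) * p.1 * (4 * ((k:ℝ) + 1) + 2) * p.1 ^ (2 * (k + 1))
        * (Real.sin (((k:ℝ) + 1) * p.2) * Real.cos p.2
            + Real.cos (((k:ℝ) + 1) * p.2) * Real.sin p.2)) * hpyth
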